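/- Let R be a halidon ring with index m with primitive m-th root of unity ω, let α₁, …, α_{2m} ∈ R, and suppose that u = Σ_{i=1}^m α_i a^{i-1} + Σ_{i=1}^m α_{m+i} a^{i-1}b is a unit of the group ring R[D_m]. Define λ_i = Σ_{r=1}^m α_{m-r+2} ω^{(i-1)(r-1)} and γ_i = Σ_{r=1}^m α_{m+r} ω^{(i-1)(r-1)} for i = 1, …, m (the index m−r+2 and the subscript m−i+2 being reduced modulo m with residue 0 replaced by m). Then for every i = 1, …, m the element λ_i λ_{m-i+2} − γ_i γ_{m-i+2} is a unit of R. -/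

import Mathlib

open scoped BigOperators

/-- `ω` is a primitive `m`-th root of unity in the halidon sense: `m` is the least
positive integer with `ω ^ m = 1`, and for every integer `k`,
`∑_{r=0}^{m-1} ω ^ (r k) = m` if `m ∣ k` and `= 0` otherwise. (Since `ω ^ m = 1`, it
suffices to quantify over natural number exponents `k`.) -/
def IsHalidonPrimitiveRoot {R : Type*} [CommRing R] (m : ℕ) (ω : R) : Prop :=
  0 < m ∧ ω ^ m = 1 ∧ (∀ k : ℕ, 0 < k → ω ^ k = 1 → m ≤ k) ∧
    ∀ k : ℕ, (∑ r ∈ Finset.range m, ω ^ (r * k)) = if m ∣ k then (m : R) else 0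

/-- The element `u = ∑_{i=1}^m α_i a^(i-1) + ∑_{i=1}^m α_{m+i} a^(i-1) b` of `R[D_m]`,
with 0-indexed coefficient functions `A B : ZMod m → R` (`A k = α_{k+1}`, coefficient
of `a^k`; `B k = α_{m+k+1}`, coefficient of `a^k * b`), where `a = DihedralGroup.r 1`
and `b = DihedralGroup.sr 0`. -/
noncomputable def dihedralElt {R : Type*} [CommRing R] (m : ℕ) [NeZero m]
    (A B : ZMod m → R) : MonoidAlgebra R (DihedralGroup m) :=
  (∑ i : ZMod m, MonoidAlgebra.single (DihedralGroup.r i) (A i)) +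
    ∑ i : ZMod m, MonoidAlgebra.single (DihedralGroup.r i * DihedralGroup.sr 0) (B i)

/-- `γ_i = ∑_{r=1}^m α_{m+r} ω^((i-1)(r-1))` when applied to the second half `B`
(0-indexed subscripts). -/
noncomputable def fwdDFT {R : Type*} [CommRing R] (m : ℕ) [NeZero m] (ω : R)
    (A : ZMod m → R) (i : ZMod m) : R :=
  ∑ r : ZMod m, A r * ω ^ (i.val * r.val)

/-- `λ_i = ∑_{r=1}^m α_{m-r+2} ω^((i-1)(r-1))` when applied to the first half `A`,
the index `m-r+2` reduced mod `m` with residue `0` replaced by `m` (0-indexed `-r`). -/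
noncomputable def revDFT {R : Type*} [CommRing R] (m : ℕ) [NeZero m] (ω : R)
    (A : ZMod m → R) (i : ZMod m) : R :=
  ∑ r : ZMod m, A (-r) * ω ^ (i.val * r.val)

section Aux

variable {R : Type*} [CommRing R] {m : ℕ} [NeZero m] {ζ : R}

omit [NeZero m] in
lemma halidon_pow_mod (hζ : ζ ^ m = 1) (n : ℕ) : ζ ^ n = ζ ^ (n % m) := by
  conv_lhs => rw [← Nat.div_add_mod n m]
  rw [pow_add, pow_mul, hζ, one_pow, one_mul]

omit [NeZero m] in
lemma halidon_pow_congr (hζ : ζ ^ m = 1) {a b : ℕ} (h : (a : ZMod m) = (b : ZMod m)) :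
    ζ ^ a = ζ ^ b := by
  rw [halidon_pow_mod hζ a, halidon_pow_mod hζ b, (ZMod.natCast_eq_natCast_iff a b m).mp h]

lemma halidon_pow_val_add (hζ : ζ ^ m = 1) (x y : ZMod m) :
    ζ ^ x.val * ζ ^ y.val = ζ ^ (x + y).val := by
  rw [← pow_add]
  exact halidon_pow_congr hζ (by push_cast [ZMod.natCast_val, ZMod.cast_id]; ring)

/-- The 2-dimensional representation of the dihedral group. -/
noncomputable def dRep (ζ : R) (hζ : ζ ^ m = 1) :
    DihedralGroup m →* Matrix (Fin 2) (Fin 2) R where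
  toFun x := match x with
    | .r i => !![ζ ^ (-i).val, 0; 0, ζ ^ i.val]
    | .sr i => !![0, ζ ^ i.val; ζ ^ (-i).val, 0]
  map_one' := by
    show !![ζ ^ (-(0 : ZMod m)).val, 0; 0, ζ ^ (0 : ZMod m).val] = 1
    simp [Matrix.one_fin_two]
  map_mul' x y := by
    rcases x with i | i <;> rcases y with j | j <;>
      simp only [DihedralGroup.r_mul_r, DihedralGroup.r_mul_sr,
        DihedralGroup.sr_mul_r, DihedralGroup.sr_mul_sr, Matrix.mul_fin_two,
        mul_zero, zero_mul, add_zero, zero_add, halidon_pow_val_add hζ] <;>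
      · congr 2 <;> ring_nf

lemma dRep_r (hζ : ζ ^ m = 1) (i : ZMod m) :
    dRep ζ hζ (DihedralGroup.r i) = !![ζ ^ (-i).val, 0; 0, ζ ^ i.val] := rfl

lemma dRep_sr (hζ : ζ ^ m = 1) (i : ZMod m) :
    dRep ζ hζ (DihedralGroup.sr i) = !![0, ζ ^ i.val; ζ ^ (-i).val, 0] := rfl

end Aux


/-- Let `R` be a halidon ring with index `m` and primitive `m`-th root
of unity `ω`, and suppose `u = ∑ αᵢ a^(i-1) + ∑ α_{m+i} a^(i-1) b` is a unit of
`R[D_m]`. With `λ_i = ∑_r α_{m-r+2} ω^((i-1)(r-1))` and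
`γ_i = ∑_r α_{m+r} ω^((i-1)(r-1))` (subscript `m-i+2` read mod `m` with `0` replaced by
`m`, i.e. `-i` when 0-indexed), the element `λ_i λ_{m-i+2} − γ_i γ_{m-i+2}` is a unit
of `R` for every `i`. -/
theorem unit_dihedral_implies_fourier_unit
    {R : Type*} [CommRing R] (m : ℕ) [NeZero m] (ω : R)
    (hω : IsHalidonPrimitiveRoot m ω) (hm : IsUnit (m : R))
    (A B : ZMod m → R) (hu : IsUnit (dihedralElt m A B)) :
    ∀ i : ZMod m,
      IsUnit (revDFT m ω A i * revDFT m ω A (-i) -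
        fwdDFT m ω B i * fwdDFT m ω B (-i)) := by
  intro j
  obtain ⟨-, hω1, -, -⟩ := hω
  set ζ : R := ω ^ j.val with hζdef
  have hζ : ζ ^ m = 1 := by rw [hζdef, ← pow_mul, mul_comm, pow_mul, hω1, one_pow]
  set φ := (MonoidAlgebra.lift R (Matrix (Fin 2) (Fin 2) R) (DihedralGroup m)) (dRep ζ hζ)
    with hφ
  have huM : IsUnit (φ (dihedralElt m A B)) := hu.map φ
  -- compute the matrix
  set p : R := ∑ i : ZMod m, A i * ζ ^ (-i).val with hp
  set t : R := ∑ i : ZMod m, A i * ζ ^ i.val with ht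
  set q : R := ∑ i : ZMod m, B i * ζ ^ (-i).val with hq
  set s : R := ∑ i : ZMod m, B i * ζ ^ i.val with hs
  have hM : φ (dihedralElt m A B) = !![p, q; s, t] := by
    rw [dihedralElt, map_add, map_sum, map_sum]
    have h1 : ∀ i : ZMod m,
        φ (MonoidAlgebra.single (DihedralGroup.r i) (A i)) =
          A i • !![ζ ^ (-i).val, 0; 0, ζ ^ i.val] := by
      intro i
      rw [hφ, MonoidAlgebra.lift_single, dRep_r]
    have h2 : ∀ i : ZMod m,
        φ (MonoidAlgebra.single (DihedralGroup.r i * DihedralGroup.sr 0) (B i)) =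
          B i • !![0, ζ ^ (-i).val; ζ ^ i.val, 0] := by
      intro i
      rw [DihedralGroup.r_mul_sr, zero_sub, hφ, MonoidAlgebra.lift_single, dRep_sr,
        neg_neg]
    simp only [h1, h2]
    ext k l
    fin_cases k <;> fin_cases l <;>
      simp [Matrix.sum_apply, hp, ht, hq, hs, mul_comm, Finset.sum_add_distrib]
  rw [hM] at huM
  have hdet : IsUnit (Matrix.det !![p, q; s, t]) :=
    (Matrix.isUnit_iff_isUnit_det _).mp huM
  rw [Matrix.det_fin_two_of] at hdet
  -- identify the DFTs
  have e1 : revDFT m ω A j = p := by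
    rw [revDFT, hp]
    refine Fintype.sum_equiv (Equiv.neg (ZMod m)) _ _ fun r => ?_
    simp only [Equiv.neg_apply, neg_neg]
    congr 1
    rw [hζdef, ← pow_mul]
  have e2 : revDFT m ω A (-j) = t := by
    rw [revDFT, ht]
    refine Fintype.sum_equiv (Equiv.neg (ZMod m)) _ _ fun r => ?_
    simp only [Equiv.neg_apply, neg_neg]
    congr 1
    rw [hζdef, ← pow_mul]
    refine halidon_pow_congr hω1 ?_
    push_cast [ZMod.natCast_val, ZMod.cast_id]
    ring
  have e3 : fwdDFT m ω B j = s := by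
    rw [fwdDFT, hs]
    refine Finset.sum_congr rfl fun r _ => ?_
    congr 1
    rw [hζdef, ← pow_mul]
  have e4 : fwdDFT m ω B (-j) = q := by
    rw [fwdDFT, hq]
    refine Finset.sum_congr rfl fun r _ => ?_
    congr 1
    rw [hζdef, ← pow_mul]
    refine halidon_pow_congr hω1 ?_
    push_cast [ZMod.natCast_val, ZMod.cast_id]
    ring
  rw [e1, e2, e3, e4]
  convert hdet using 1
  ring
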